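/- For a graph G with no isolated vertices, γ_tR(G) = γ_t(G) if and only if G is a disjoint union of copies of K_2. -/

import Mathlib

open Finset

/-- A graph has no isolated vertices. -/
def SimpleGraph.IsolateFree {V : Type*} (G : SimpleGraph V) : Prop :=
  ∀ v, ∃ u, G.Adj v u

/-- A Roman dominating function. -/
def SimpleGraph.IsRDF {V : Type*} (G : SimpleGraph V) (f : V → Fin 3) : Prop :=
  ∀ v, f v = 0 → ∃ u, G.Adj v u ∧ f u = 2

/-- A total Roman dominating function. -/
def SimpleGraph.IsTRDF {V : Type*} (G : SimpleGraph V) (f : V → Fin 3) : Prop :=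
  (∀ v, f v = 0 → ∃ u, G.Adj v u ∧ f u = 2) ∧
  (∀ v, f v ≠ 0 → ∃ u, G.Adj v u ∧ f u ≠ 0)

/-- The Roman domination number. -/
noncomputable def SimpleGraph.rdn {V : Type*} [Fintype V] (G : SimpleGraph V) : ℕ :=
  sInf {w | ∃ f : V → Fin 3, G.IsRDF f ∧ w = ∑ v, (f v : ℕ)}

/-- The total Roman domination number. -/
noncomputable def SimpleGraph.trdn {V : Type*} [Fintype V] (G : SimpleGraph V) : ℕ :=
  sInf {w | ∃ f : V → Fin 3, G.IsTRDF f ∧ w = ∑ v, (f v : ℕ)}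

/-- A total dominating set. -/
def SimpleGraph.IsTDS {V : Type*} (G : SimpleGraph V) (S : Finset V) : Prop :=
  ∀ v, ∃ u ∈ S, G.Adj v u

/-- A dominating set. -/
def SimpleGraph.IsDS {V : Type*} (G : SimpleGraph V) (S : Finset V) : Prop :=
  ∀ v, v ∈ S ∨ ∃ u ∈ S, G.Adj v u

/-- The total domination number. -/
noncomputable def SimpleGraph.tdn {V : Type*} [Fintype V] (G : SimpleGraph V) : ℕ :=
  sInf {n | ∃ S : Finset V, G.IsTDS S ∧ n = S.card}

/-- The domination number. -/
noncomputable def SimpleGraph.dn {V : Type*} [Fintype V] (G : SimpleGraph V) : ℕ :=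
  sInf {n | ∃ S : Finset V, G.IsDS S ∧ n = S.card}

/-- The total Roman bondage number, in ℕ∞ (∞ if no valid edge set exists). -/
noncomputable def SimpleGraph.btR {V : Type*} [Fintype V] (G : SimpleGraph V) : ℕ∞ :=
  sInf {n : ℕ∞ | ∃ E' : Finset (Sym2 V), ↑E' ⊆ G.edgeSet ∧
    (G.deleteEdges ↑E').IsolateFree ∧ G.trdn < (G.deleteEdges ↑E').trdn ∧ n = E'.card}

/-- The total bondage number, in ℕ∞. -/
noncomputable def SimpleGraph.bt {V : Type*} [Fintype V] (G : SimpleGraph V) : ℕ∞ :=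
  sInf {n : ℕ∞ | ∃ E' : Finset (Sym2 V), ↑E' ⊆ G.edgeSet ∧
    (G.deleteEdges ↑E').IsolateFree ∧ G.tdn < (G.deleteEdges ↑E').tdn ∧ n = E'.card}

/-- The bondage number, in ℕ∞. -/
noncomputable def SimpleGraph.bond {V : Type*} [Fintype V] (G : SimpleGraph V) : ℕ∞ :=
  sInf {n : ℕ∞ | ∃ E' : Finset (Sym2 V), ↑E' ⊆ G.edgeSet ∧
    G.dn < (G.deleteEdges ↑E').dn ∧ n = E'.card}

/-- The vertex cover number. -/
noncomputable def SimpleGraph.vcn {V : Type*} [Fintype V] (G : SimpleGraph V) : ℕ :=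
  sInf {n | ∃ S : Finset V, (∀ u v, G.Adj u v → u ∈ S ∨ v ∈ S) ∧ n = S.card}

/-- The S-external private neighborhood of v. -/
def SimpleGraph.epn {V : Type*} (G : SimpleGraph V) (v : V) (S : Set V) : Set V :=
  {w | w ∉ S ∧ G.Adj w v ∧ ∀ x ∈ S, G.Adj w x → x = v}

section Aux

variable {V : Type*} [Fintype V] (G : SimpleGraph V)

/-- The support of a TRDF is a total dominating set. -/
lemma aux_supp_tds (f : V → Fin 3) (hf : G.IsTRDF f) :
    G.IsTDS (Finset.univ.filter fun v => f v ≠ 0) := by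
  intro v
  by_cases h : f v = 0
  · obtain ⟨u, hu, hu2⟩ := hf.1 v h
    exact ⟨u, by simp [hu2], hu⟩
  · obtain ⟨u, hu, hu2⟩ := hf.2 v h
    exact ⟨u, by simp [hu2], hu⟩

lemma aux_card_le_sum (f : V → Fin 3) :
    (Finset.univ.filter fun v => f v ≠ 0).card ≤ ∑ v, (f v : ℕ) := by
  calc (Finset.univ.filter fun v => f v ≠ 0).card
      = ∑ v ∈ (Finset.univ.filter fun v => f v ≠ 0), 1 := by
        simp
    _ ≤ ∑ v ∈ (Finset.univ.filter fun v => f v ≠ 0), (f v : ℕ) := by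
        refine Finset.sum_le_sum fun v hv => ?_
        simp only [Finset.mem_filter] at hv
        have : (f v : ℕ) ≠ 0 := fun h => hv.2 (Fin.ext h)
        omega
    _ ≤ ∑ v, (f v : ℕ) :=
        Finset.sum_le_sum_of_subset (Finset.filter_subset _ _)

/-- The constant-2 function is a TRDF when G is isolate-free. -/
lemma aux_const2_trdf (hG : G.IsolateFree) : G.IsTRDF (fun _ => 2) := by
  constructor
  · intro v hv; exact absurd hv (show (2 : Fin 3) ≠ 0 by decide)
  · intro v _
    obtain ⟨u, hu⟩ := hG v
    exact ⟨u, hu, show (2 : Fin 3) ≠ 0 by decide⟩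

lemma aux_tdn_le (S : Finset V) (hS : G.IsTDS S) : G.tdn ≤ S.card :=
  Nat.sInf_le ⟨S, hS, rfl⟩

lemma aux_tdn_le_trdn (hG : G.IsolateFree) : G.tdn ≤ G.trdn := by
  have hne : {w | ∃ f : V → Fin 3, G.IsTRDF f ∧ w = ∑ v, (f v : ℕ)}.Nonempty :=
    ⟨∑ v, ((2 : Fin 3) : ℕ), fun _ => 2, aux_const2_trdf G hG, rfl⟩
  obtain ⟨f, hf, heq⟩ := Nat.sInf_mem hne
  calc G.tdn ≤ (Finset.univ.filter fun v => f v ≠ 0).card :=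
        aux_tdn_le G _ (aux_supp_tds G f hf)
    _ ≤ ∑ v, (f v : ℕ) := aux_card_le_sum f
    _ = G.trdn := heq.symm

end Aux

theorem stmt_4 {V : Type*} [Fintype V] (G : SimpleGraph V) (hG : G.IsolateFree) :
    G.trdn = G.tdn ↔ ∀ v, ∃! u, G.Adj v u := by
  classical
  constructor
  · -- forward direction
    intro h v
    obtain ⟨u, hu⟩ := hG v
    refine ⟨u, hu, fun w (hw : G.Adj v w) => ?_⟩
    by_contra hwu
    -- get a minimum-weight TRDF
    have hne : {w | ∃ f : V → Fin 3, G.IsTRDF f ∧ w = ∑ x, (f x : ℕ)}.Nonempty :=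
      ⟨∑ x, ((2 : Fin 3) : ℕ), fun _ => 2, aux_const2_trdf G hG, rfl⟩
    obtain ⟨f, hf, heq⟩ := Nat.sInf_mem hne
    obtain ⟨S, hSdef⟩ : ∃ S : Finset V, S = Finset.univ.filter fun x => f x ≠ 0 := ⟨_, rfl⟩
    have h1 : G.tdn ≤ S.card := by rw [hSdef]; exact aux_tdn_le G _ (aux_supp_tds G f hf)
    have h2 : S.card ≤ ∑ x, (f x : ℕ) := by rw [hSdef]; exact aux_card_le_sum f
    have htr : G.trdn = ∑ x, (f x : ℕ) := heq
    have h3 : ∑ x, (f x : ℕ) = G.tdn := by rw [← htr, h]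
    clear heq hne
    have hcard : S.card = ∑ x, (f x : ℕ) := le_antisymm h2 (by omega)
    -- no vertex has value 2
    have hno2 : ∀ x, f x ≠ 2 := by
      intro x hx
      have hxS : x ∈ S := by simp [hSdef, hx]
      have : ∑ y ∈ S, (1 : ℕ) < ∑ y ∈ S, (f y : ℕ) := by
        refine Finset.sum_lt_sum (fun y hy => ?_) ⟨x, hxS, by rw [hx]; decide⟩
        simp only [hSdef, Finset.mem_filter] at hy
        have : (f y : ℕ) ≠ 0 := fun hc => hy.2 (Fin.ext hc)
        omega
      have hle : ∑ y ∈ S, (f y : ℕ) ≤ ∑ y, (f y : ℕ) :=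
        Finset.sum_le_sum_of_subset (hSdef ▸ Finset.filter_subset _ _)
      simp only [Finset.sum_const, smul_eq_mul, mul_one] at this
      omega
    -- hence no vertex has value 0, so f ≡ 1
    have hno0 : ∀ x, f x ≠ 0 := by
      intro x hx
      obtain ⟨y, _, hy2⟩ := hf.1 x hx
      exact hno2 y hy2
    have hf1 : ∀ x, f x = 1 := by
      intro x
      have := hno0 x; have := hno2 x
      omega
    have hSuniv : S = Finset.univ := by
      ext x; simp [hSdef, hno0 x]
    have htdn : G.tdn = Fintype.card V := by
      have : ∑ x, (f x : ℕ) = Fintype.card V := by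
        simp [hf1]
      omega
    -- build a smaller total dominating set
    have hVpos : 0 < Fintype.card V := Fintype.card_pos_iff.mpr ⟨v⟩
    by_cases hx : ∃ x, ∀ y, G.Adj x y → y = v
    · obtain ⟨x, hxv⟩ := hx
      have hadjxv : G.Adj x v := by
        obtain ⟨y, hy⟩ := hG x
        rwa [hxv y hy] at hy
      have hTDS : G.IsTDS (Finset.univ.erase x) := by
        intro z
        by_cases hz : z = x
        · exact ⟨v, Finset.mem_erase.mpr ⟨fun hc => G.irrefl (hc ▸ hadjxv), Finset.mem_univ v⟩,
            hz ▸ hadjxv⟩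
        · obtain ⟨y, hy⟩ := hG z
          by_cases hyx : y = x
          · -- z is adjacent to x, so z = v
            have hzv : z = v := hxv z (G.adj_symm (hyx ▸ hy))
            rcases (em (u = x)) with hux | hux
            · refine ⟨w, Finset.mem_erase.mpr ⟨fun hc => hwu (hc.trans hux.symm),
                Finset.mem_univ w⟩, hzv ▸ hw⟩
            · exact ⟨u, Finset.mem_erase.mpr ⟨hux, Finset.mem_univ u⟩, hzv ▸ hu⟩
          · exact ⟨y, Finset.mem_erase.mpr ⟨hyx, Finset.mem_univ y⟩, hy⟩
      have := aux_tdn_le G _ hTDS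
      rw [Finset.card_erase_of_mem (Finset.mem_univ x), Finset.card_univ] at this
      omega
    · push_neg at hx
      have hTDS : G.IsTDS (Finset.univ.erase v) := by
        intro z
        obtain ⟨y, hy, hyv⟩ := hx z
        exact ⟨y, Finset.mem_erase.mpr ⟨hyv, Finset.mem_univ y⟩, hy⟩
      have := aux_tdn_le G _ hTDS
      rw [Finset.card_erase_of_mem (Finset.mem_univ v), Finset.card_univ] at this
      omega
  · -- reverse direction
    intro h
    -- every total dominating set is all of V
    have hTDS_univ : ∀ S : Finset V, G.IsTDS S → S = Finset.univ := by
      intro S hS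
      ext x
      simp only [Finset.mem_univ, iff_true]
      obtain ⟨u, hu, _⟩ := h x
      obtain ⟨w, hwS, hw⟩ := hS u
      obtain ⟨z, _, hzuniq⟩ := h u
      have h1 : w = z := hzuniq w hw
      have h2 : x = z := hzuniq x (G.adj_symm hu)
      rw [← h2] at h1
      exact h1 ▸ hwS
    have huniv_tds : G.IsTDS (Finset.univ : Finset V) := by
      intro z
      obtain ⟨y, hy⟩ := hG z
      exact ⟨y, Finset.mem_univ y, hy⟩
    have htdn : G.tdn = Fintype.card V := by
      have hne : {n | ∃ S : Finset V, G.IsTDS S ∧ n = S.card}.Nonempty :=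
        ⟨(Finset.univ : Finset V).card, Finset.univ, huniv_tds, rfl⟩
      obtain ⟨S, hS, heq⟩ := Nat.sInf_mem hne
      rw [show G.tdn = S.card from heq, hTDS_univ S hS, Finset.card_univ]
    have htrdn_le : G.trdn ≤ Fintype.card V := by
      refine Nat.sInf_le ⟨fun _ => 1,
        ⟨fun v hv => absurd hv (show (1 : Fin 3) ≠ 0 by decide), fun v _ => ?_⟩, ?_⟩
      · obtain ⟨y, hy⟩ := hG v
        exact ⟨y, hy, show (1 : Fin 3) ≠ 0 by decide⟩
      · simp
    have := aux_tdn_le_trdn G hG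
    omega
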